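/- If u₁, u₂ : Ω → ℂ are C¹ functions on an open set Ω ⊆ ℝ² with |u₂| ≡ 1, then the product u = u₁u₂ satisfies |∇u|² = |∇u₁|² + |u₁|² |∇u₂|² + 2 j(u₁)·j(u₂) pointwise, and in particular |∇u|² ≤ |∇u₁|² + |∇u₂|² + 2 j(u₁)·j(u₂) whenever |u₁| ≤ 1. -/

import Mathlib

/-- The real pairing `(a+ib, c+id) = ac + bd` on complex numbers. -/
noncomputable def cpair (z w : ℂ) : ℝ := z.re * w.re + z.im * w.im

/-- If `u₁, u₂ : Ω → ℂ` are `C¹` on an open `Ω ⊆ ℝ²` with `|u₂| ≡ 1`, then the product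
`u = u₁ u₂` satisfies `|∇u|² = |∇u₁|² + |u₁|²|∇u₂|² + 2 j(u₁)·j(u₂)` pointwise, and in
particular `|∇u|² ≤ |∇u₁|² + |∇u₂|² + 2 j(u₁)·j(u₂)` whenever `|u₁| ≤ 1`. -/

lemma key_aux (a b p q : ℂ) (hb : b.re ^ 2 + b.im ^ 2 = 1)
    (hq : b.re * q.re + b.im * q.im = 0) :
    ‖a * q + b * p‖ ^ 2 =
      ‖p‖ ^ 2 + ‖a‖ ^ 2 * ‖q‖ ^ 2 +
        2 * (cpair (Complex.I * a) p * cpair (Complex.I * b) q) := by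
  simp only [Complex.sq_norm, Complex.normSq_apply, cpair, Complex.add_re, Complex.add_im,
    Complex.mul_re, Complex.mul_im, Complex.I_re, Complex.I_im]
  ring_nf
  linear_combination (p.re ^ 2 + p.im ^ 2) * hb + (2 * (a.re * p.re + a.im * p.im)) * hq

lemma orth_aux (Ω : Set (ℝ × ℝ)) (hΩ : IsOpen Ω) (u₂ : ℝ × ℝ → ℂ)
    (h2 : ContDiffOn ℝ 1 u₂ Ω)
    (hmod : ∀ y ∈ Ω, ‖u₂ y‖ = 1)
    (x : ℝ × ℝ) (hx : x ∈ Ω) (v : ℝ × ℝ) :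
    (u₂ x).re * (fderiv ℝ u₂ x v).re + (u₂ x).im * (fderiv ℝ u₂ x v).im = 0 := by
  have hd2 : DifferentiableAt ℝ u₂ x :=
    (h2.differentiableOn one_ne_zero).differentiableAt (hΩ.mem_nhds hx)
  have hdc : DifferentiableAt ℝ (fun y => (starRingEnd ℂ) (u₂ y)) x :=
    Complex.conjCLE.differentiableAt.comp x hd2
  have hfc : fderiv ℝ (fun y => (starRingEnd ℂ) (u₂ y)) x v
      = (starRingEnd ℂ) (fderiv ℝ u₂ x v) := by
    have := Complex.conjCLE.comp_fderiv (f := u₂) (x := x)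
    calc fderiv ℝ (fun y => (starRingEnd ℂ) (u₂ y)) x v
        = (Complex.conjCLE.toContinuousLinearMap.comp (fderiv ℝ u₂ x)) v := by rw [← this]; rfl
      _ = (starRingEnd ℂ) (fderiv ℝ u₂ x v) := rfl
  have heq : (fun y => (starRingEnd ℂ) (u₂ y) * u₂ y) =ᶠ[nhds x] fun _ => (1 : ℂ) := by
    filter_upwards [hΩ.mem_nhds hx] with y hy
    have := hmod y hy
    rw [Complex.conj_mul']
    norm_cast
    rw [this]; norm_num
  have hz : fderiv ℝ (fun y => (starRingEnd ℂ) (u₂ y) * u₂ y) x = 0 := by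
    rw [heq.fderiv_eq, fderiv_const_apply]
  have hm := fderiv_fun_mul hdc hd2
  rw [hm] at hz
  have hz' := congrArg (fun L => (L v : ℂ)) hz
  simp only [ContinuousLinearMap.add_apply, ContinuousLinearMap.smul_apply, hfc,
    ContinuousLinearMap.zero_apply, smul_eq_mul] at hz'
  have := congrArg Complex.re hz'
  simp only [Complex.add_re, Complex.mul_re, Complex.conj_re, Complex.conj_im,
    Complex.zero_re] at this
  linarith

theorem stmt3 (Ω : Set (ℝ × ℝ)) (hΩ : IsOpen Ω) (u₁ u₂ : ℝ × ℝ → ℂ)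
    (h1 : ContDiffOn ℝ 1 u₁ Ω) (h2 : ContDiffOn ℝ 1 u₂ Ω)
    (hmod : ∀ y ∈ Ω, ‖u₂ y‖ = 1)
    (x : ℝ × ℝ) (hx : x ∈ Ω) :
    (‖fderivWithin ℝ (fun y => u₁ y * u₂ y) Ω x (1, 0)‖ ^ 2 +
        ‖fderivWithin ℝ (fun y => u₁ y * u₂ y) Ω x (0, 1)‖ ^ 2 =
      (‖fderivWithin ℝ u₁ Ω x (1, 0)‖ ^ 2 +
          ‖fderivWithin ℝ u₁ Ω x (0, 1)‖ ^ 2) +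
        ‖u₁ x‖ ^ 2 *
          (‖fderivWithin ℝ u₂ Ω x (1, 0)‖ ^ 2 +
            ‖fderivWithin ℝ u₂ Ω x (0, 1)‖ ^ 2) +
        2 * (cpair (Complex.I * u₁ x) (fderivWithin ℝ u₁ Ω x (1, 0)) *
              cpair (Complex.I * u₂ x) (fderivWithin ℝ u₂ Ω x (1, 0)) +
            cpair (Complex.I * u₁ x) (fderivWithin ℝ u₁ Ω x (0, 1)) *
              cpair (Complex.I * u₂ x) (fderivWithin ℝ u₂ Ω x (0, 1)))) ∧
    (‖u₁ x‖ ≤ 1 →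
      ‖fderivWithin ℝ (fun y => u₁ y * u₂ y) Ω x (1, 0)‖ ^ 2 +
          ‖fderivWithin ℝ (fun y => u₁ y * u₂ y) Ω x (0, 1)‖ ^ 2 ≤
        (‖fderivWithin ℝ u₁ Ω x (1, 0)‖ ^ 2 +
            ‖fderivWithin ℝ u₁ Ω x (0, 1)‖ ^ 2) +
          (‖fderivWithin ℝ u₂ Ω x (1, 0)‖ ^ 2 +
            ‖fderivWithin ℝ u₂ Ω x (0, 1)‖ ^ 2) +
          2 * (cpair (Complex.I * u₁ x) (fderivWithin ℝ u₁ Ω x (1, 0)) *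
                cpair (Complex.I * u₂ x) (fderivWithin ℝ u₂ Ω x (1, 0)) +
              cpair (Complex.I * u₁ x) (fderivWithin ℝ u₁ Ω x (0, 1)) *
                cpair (Complex.I * u₂ x) (fderivWithin ℝ u₂ Ω x (0, 1)))) := by
  have hd1 : DifferentiableAt ℝ u₁ x :=
    (h1.differentiableOn one_ne_zero).differentiableAt (hΩ.mem_nhds hx)
  have hd2 : DifferentiableAt ℝ u₂ x :=
    (h2.differentiableOn one_ne_zero).differentiableAt (hΩ.mem_nhds hx)
  have hb : (u₂ x).re ^ 2 + (u₂ x).im ^ 2 = 1 := by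
    have := hmod x hx
    have h' : Complex.normSq (u₂ x) = 1 := by rw [← Complex.sq_norm, this]; norm_num
    simpa [Complex.normSq_apply, sq] using h'
  have hE : ∀ v : ℝ × ℝ, fderivWithin ℝ (fun y => u₁ y * u₂ y) Ω x v
      = u₁ x * fderiv ℝ u₂ x v + u₂ x * fderiv ℝ u₁ x v := by
    intro v
    rw [fderivWithin_of_isOpen hΩ hx, fderiv_fun_mul hd1 hd2]
    simp [smul_eq_mul]
  have h1w : fderivWithin ℝ u₁ Ω x = fderiv ℝ u₁ x := fderivWithin_of_isOpen hΩ hx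
  have h2w : fderivWithin ℝ u₂ Ω x = fderiv ℝ u₂ x := fderivWithin_of_isOpen hΩ hx
  have hkey : ∀ v : ℝ × ℝ, ‖fderivWithin ℝ (fun y => u₁ y * u₂ y) Ω x v‖ ^ 2
      = ‖fderiv ℝ u₁ x v‖ ^ 2 +
        ‖u₁ x‖ ^ 2 * ‖fderiv ℝ u₂ x v‖ ^ 2 +
        2 * (cpair (Complex.I * u₁ x) (fderiv ℝ u₁ x v) *
          cpair (Complex.I * u₂ x) (fderiv ℝ u₂ x v)) := by
    intro v
    rw [hE v]
    exact key_aux (u₁ x) (u₂ x) (fderiv ℝ u₁ x v) (fderiv ℝ u₂ x v) hb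
      (orth_aux Ω hΩ u₂ h2 hmod x hx v)
  rw [h1w, h2w, hkey (1, 0), hkey (0, 1)]
  constructor
  · ring
  · intro ha
    have ha2 : ‖u₁ x‖ ^ 2 ≤ 1 := by nlinarith [norm_nonneg (u₁ x)]
    nlinarith [sq_nonneg (‖fderiv ℝ u₂ x (1, 0)‖),
      sq_nonneg (‖fderiv ℝ u₂ x (0, 1)‖)]
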